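/- Bounded distortion principle: for every n ≥ 1, σ ∈ Ω_n and x ∈ J_σ, ξ^{-1} ≤ |(f^n)'(x)| · |J_σ| ≤ ξ; moreover, for each 1 ≤ j ≤ N, |J_{σ*j}| ≥ ξ^{-2} B^{-1} |J_σ|, where σ*j denotes the word σ followed by the letter j and f^n denotes the n-fold composition of f. -/

import Mathlib

open MeasureTheory Filter Metric

noncomputable section

/-- A cookie-cutter system on `J = [0,1]`. -/
structure CookieCutter where
  N : ℕ
  hN : 2 ≤ N
  Jsub : Fin N → Set ℝ
  f : ℝ → ℝ
  φ : Fin N → ℝ → ℝ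
  c : ℝ
  γ : ℝ
  b : ℝ
  B : ℝ
  hJsub_sub : ∀ j, Jsub j ⊆ Set.Icc 0 1
  hJsub_interval : ∀ j, ∃ u v : ℝ, u ≤ v ∧ Jsub j = Set.Icc u v
  hJsub_disj : ∀ i j, i ≠ j → Disjoint (Jsub i) (Jsub j)
  hbij : ∀ j, Set.BijOn f (Jsub j) (Set.Icc 0 1)
  hφ_maps : ∀ j, ∀ x ∈ Set.Icc (0:ℝ) 1, φ j x ∈ Jsub j
  hφ_rinv : ∀ j, ∀ x ∈ Set.Icc (0:ℝ) 1, f (φ j x) = x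
  hφ_linv : ∀ j, ∀ x ∈ Jsub j, φ j (f x) = x
  hfdiff : ∀ j, ∀ x ∈ Jsub j, DifferentiableAt ℝ f x
  hφdiff : ∀ j, ∀ x ∈ Set.Icc (0:ℝ) 1, DifferentiableAt ℝ (φ j) x
  hc : 0 < c
  hγ : γ ∈ Set.Ioc (0:ℝ) 1
  hHolder : ∀ j, ∀ x ∈ Jsub j, ∀ y ∈ Jsub j, |deriv f x - deriv f y| ≤ c * |x - y| ^ γ
  hb : IsGLB ((fun x => |deriv f x|) '' ⋃ j, Jsub j) b
  hB : IsLUB ((fun x => |deriv f x|) '' ⋃ j, Jsub j) B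
  hb1 : 1 < b

namespace CookieCutter

variable (cc : CookieCutter)

/-- `φ_σ = φ_{σ_1} ∘ ⋯ ∘ φ_{σ_n}` for a word `σ`. -/
def wordMap : List (Fin cc.N) → ℝ → ℝ
  | [] => id
  | j :: rest => cc.φ j ∘ wordMap rest

/-- The basic interval `J_σ = φ_σ(J)`. -/
def Jc (σ : List (Fin cc.N)) : Set ℝ := cc.wordMap σ '' Set.Icc 0 1

/-- The diameter `|J_σ|`. -/
def diamJ (σ : List (Fin cc.N)) : ℝ := Metric.diam (cc.Jc σ)

/-- `‖φ'_σ‖ = sup_{x ∈ J} |φ'_σ(x)|`. -/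
def φnorm (σ : List (Fin cc.N)) : ℝ :=
  sSup ((fun x => |deriv (cc.wordMap σ) x|) '' Set.Icc 0 1)

/-- The distortion constant `ξ = exp (c / (b^γ − 1))`. -/
def xi : ℝ := Real.exp (cc.c / (cc.b ^ cc.γ - 1))

/-- The cookie-cutter set `E = ⋂_{n ≥ 1} ⋃_{σ ∈ Ω_n} J_σ`. -/
def E : Set ℝ := ⋂ (n : ℕ) (_ : 1 ≤ n), ⋃ σ : Fin n → Fin cc.N, cc.Jc (List.ofFn σ)

/-- `η = ξ^{9h}`. -/
def eta (h : ℝ) : ℝ := cc.xi ^ ((9:ℝ) * h)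

/-- `L = η³ ξ^{3h}`. -/
def Lconst (h : ℝ) : ℝ := (cc.eta h) ^ 3 * cc.xi ^ ((3:ℝ) * h)

/-- A Gibbs-like measure for the cookie-cutter system: a Borel probability measure
supported on `E` with `η⁻¹|J_σ|^h ≤ μ(J_σ) ≤ η|J_σ|^h` for every word `σ`. -/
def IsGibbsLike (μ : Measure ℝ) (h : ℝ) : Prop :=
  IsProbabilityMeasure μ ∧ μ (cc.Eᶜ) = 0 ∧
    ∀ σ : List (Fin cc.N), σ ≠ [] →
      (cc.eta h)⁻¹ * cc.diamJ σ ^ h ≤ (μ (cc.Jc σ)).toReal ∧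
      (μ (cc.Jc σ)).toReal ≤ cc.eta h * cc.diamJ σ ^ h

/-- A finite maximal antichain in `Ω`. -/
def IsFMA (Γ : Finset (List (Fin cc.N))) : Prop :=
  (∀ σ ∈ Γ, σ ≠ []) ∧
  (∀ ω : ℕ → Fin cc.N, ∃ k : ℕ, 1 ≤ k ∧ (List.ofFn fun i : Fin k => ω i) ∈ Γ) ∧
  ∀ σ ∈ Γ, ∀ τ ∈ Γ, σ <+: τ → σ = τ

end CookieCutter

/-- The `n`-th quantization error of order `r`. -/
def Vnr (μ : Measure ℝ) (n : ℕ) (r : ℝ) : ℝ :=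
  sInf ((fun α : Finset ℝ => ∫ x, Metric.infDist x (α : Set ℝ) ^ r ∂μ) ''
    {α : Finset ℝ | α.Nonempty ∧ α.card ≤ n})

/-- The auxiliary quantization error `u_{n,r}` with `U = (0,1)`. -/
def unr (μ : Measure ℝ) (n : ℕ) (r : ℝ) : ℝ :=
  sInf ((fun α : Finset ℝ =>
      ∫ x, Metric.infDist x ((α : Set ℝ) ∪ (Set.Ioo (0:ℝ) 1)ᶜ) ^ r ∂μ) ''
    {α : Finset ℝ | α.card ≤ n})


namespace CookieCutter
variable (cc : CookieCutter)

lemma deriv_bounds : ∀ j, ∀ x ∈ cc.Jsub j, cc.b ≤ |deriv cc.f x| ∧ |deriv cc.f x| ≤ cc.B := by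
  intro j x hx
  have hmem : |deriv cc.f x| ∈ (fun x => |deriv cc.f x|) '' ⋃ j, cc.Jsub j :=
    ⟨x, Set.mem_iUnion.2 ⟨j, hx⟩, rfl⟩
  exact ⟨cc.hb.1 hmem, cc.hB.1 hmem⟩

lemma b_pos : 0 < cc.b := lt_trans one_pos cc.hb1

lemma one_lt_B : 1 < cc.B := by
  have hN0 : 0 < cc.N := by have := cc.hN; omega
  obtain ⟨u, v, huv, hJ⟩ := cc.hJsub_interval ⟨0, hN0⟩
  have hu : u ∈ cc.Jsub ⟨0, hN0⟩ := by rw [hJ]; exact ⟨le_refl u, huv⟩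
  obtain ⟨h1, h2⟩ := cc.deriv_bounds _ u hu
  linarith [cc.hb1]

lemma B_pos : 0 < cc.B := lt_trans one_pos cc.one_lt_B

lemma wordMap_mem : ∀ (σ : List (Fin cc.N)) (t : ℝ), t ∈ Set.Icc (0:ℝ) 1 →
    cc.wordMap σ t ∈ Set.Icc (0:ℝ) 1 := by
  intro σ
  induction σ with
  | nil => intro t ht; exact ht
  | cons j τ ih =>
    intro t ht
    exact cc.hJsub_sub j (cc.hφ_maps j _ (ih t ht))

lemma Jc_nil : cc.Jc [] = Set.Icc 0 1 := by
  simp [Jc, wordMap, Set.image_id]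

lemma Jc_subset_unit (σ : List (Fin cc.N)) : cc.Jc σ ⊆ Set.Icc 0 1 := by
  rintro x ⟨t, ht, rfl⟩
  exact cc.wordMap_mem σ t ht

lemma Jc_cons_subset (j : Fin cc.N) (τ : List (Fin cc.N)) : cc.Jc (j :: τ) ⊆ cc.Jsub j := by
  rintro x ⟨t, ht, rfl⟩
  exact cc.hφ_maps j _ (cc.wordMap_mem τ t ht)

lemma f_mem_of_cons {j : Fin cc.N} {τ : List (Fin cc.N)} {x : ℝ} (hx : x ∈ cc.Jc (j :: τ)) :
    cc.f x ∈ cc.Jc τ := by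
  obtain ⟨t, ht, rfl⟩ := hx
  have : cc.f (cc.φ j (cc.wordMap τ t)) = cc.wordMap τ t :=
    cc.hφ_rinv j _ (cc.wordMap_mem τ t ht)
  rw [wordMap]; simp only [Function.comp_apply]
  rw [this]; exact ⟨t, ht, rfl⟩

lemma iter_mem_drop : ∀ (σ : List (Fin cc.N)) (x : ℝ), x ∈ cc.Jc σ →
    ∀ k, k ≤ σ.length → cc.f^[k] x ∈ cc.Jc (σ.drop k) := by
  intro σ
  induction σ with
  | nil =>
    intro x hx k hk
    simp only [List.length_nil, Nat.le_zero] at hk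
    subst hk; simpa using hx
  | cons j τ ih =>
    intro x hx k hk
    match k with
    | 0 => simpa using hx
    | (k+1) =>
      rw [Function.iterate_succ_apply]
      exact ih (cc.f x) (cc.f_mem_of_cons hx) k (by simpa using hk)

lemma f_iter_wordMap : ∀ (σ : List (Fin cc.N)) (t : ℝ), t ∈ Set.Icc (0:ℝ) 1 →
    cc.f^[σ.length] (cc.wordMap σ t) = t := by
  intro σ
  induction σ with
  | nil => intro t _; simp [wordMap]
  | cons j τ ih =>
    intro t ht
    have h1 : cc.f (cc.wordMap (j :: τ) t) = cc.wordMap τ t := by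
      show cc.f (cc.φ j (cc.wordMap τ t)) = _
      exact cc.hφ_rinv j _ (cc.wordMap_mem τ t ht)
    rw [List.length_cons, Function.iterate_succ_apply, h1, ih t ht]

lemma hasDerivAt_iter : ∀ (σ : List (Fin cc.N)) (x : ℝ), x ∈ cc.Jc σ →
    HasDerivAt (cc.f^[σ.length])
      (∏ k ∈ Finset.range σ.length, deriv cc.f (cc.f^[k] x)) x := by
  intro σ
  induction σ with
  | nil => intro x _; simpa using hasDerivAt_id x
  | cons j τ ih =>
    intro x hx
    have hfx : HasDerivAt cc.f (deriv cc.f x) x :=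
      (cc.hfdiff j x (cc.Jc_cons_subset j τ hx)).hasDerivAt
    have hrest := ih (cc.f x) (cc.f_mem_of_cons hx)
    have hcomp := HasDerivAt.comp x hrest hfx
    have heq : cc.f^[τ.length] ∘ cc.f = cc.f^[(j :: τ).length] := by
      rw [List.length_cons, Function.iterate_succ]
    rw [heq] at hcomp
    refine hcomp.congr_deriv (Eq.symm ?_)
    rw [List.length_cons, Finset.prod_range_succ']
    simp [Function.iterate_succ_apply]

lemma slope_bound (j : Fin cc.N) : ∀ {x y : ℝ}, x ∈ cc.Jsub j → y ∈ cc.Jsub j →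
    cc.b * |x - y| ≤ |cc.f x - cc.f y| ∧ |cc.f x - cc.f y| ≤ cc.B * |x - y| := by
  have key : ∀ {x y : ℝ}, x ∈ cc.Jsub j → y ∈ cc.Jsub j → x < y →
      cc.b * |x - y| ≤ |cc.f x - cc.f y| ∧ |cc.f x - cc.f y| ≤ cc.B * |x - y| := by
    intro x y hx hy hxy
    obtain ⟨u, v, huv, hJ⟩ := cc.hJsub_interval j
    have hsub : Set.Icc x y ⊆ cc.Jsub j := by
      rw [hJ] at hx hy ⊢
      exact Set.Icc_subset_Icc hx.1 hy.2
    have hcont : ContinuousOn cc.f (Set.Icc x y) := fun z hz =>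
      (cc.hfdiff j z (hsub hz)).continuousAt.continuousWithinAt
    have hderiv : ∀ z ∈ Set.Ioo x y, HasDerivAt cc.f (deriv cc.f z) z := fun z hz =>
      (cc.hfdiff j z (hsub (Set.Ioo_subset_Icc_self hz))).hasDerivAt
    obtain ⟨z, hz, hslope⟩ := exists_hasDerivAt_eq_slope cc.f (deriv cc.f) hxy hcont hderiv
    obtain ⟨hb, hB⟩ := cc.deriv_bounds j z (hsub (Set.Ioo_subset_Icc_self hz))
    have h1 : |cc.f y - cc.f x| = |deriv cc.f z| * (y - x) := by
      rw [hslope, abs_div, abs_of_pos (by linarith : (0:ℝ) < y - x),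
        div_mul_cancel₀ _ (by linarith : y - x ≠ 0)]
    have h2 : |x - y| = y - x := by rw [abs_sub_comm]; exact abs_of_pos (by linarith)
    rw [abs_sub_comm (cc.f x), h1, h2]
    constructor
    · exact mul_le_mul_of_nonneg_right hb (by linarith)
    · exact mul_le_mul_of_nonneg_right hB (by linarith)
  intro x y hx hy
  rcases lt_trichotomy x y with h | h | h
  · exact key hx hy h
  · subst h; simp [cc.B_pos.le]
  · have := key hy hx h
    rwa [abs_sub_comm, abs_sub_comm (cc.f y)] at this

lemma continuousOn_wordMap (σ : List (Fin cc.N)) :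
    ContinuousOn (cc.wordMap σ) (Set.Icc 0 1) := by
  induction σ with
  | nil => exact continuousOn_id
  | cons j τ ih =>
    have hφ : ContinuousOn (cc.φ j) (Set.Icc 0 1) := fun z hz =>
      (cc.hφdiff j z hz).continuousAt.continuousWithinAt
    exact hφ.comp ih (fun t ht => cc.wordMap_mem τ t ht)

lemma isCompact_Jc (σ : List (Fin cc.N)) : IsCompact (cc.Jc σ) :=
  isCompact_Icc.image_of_continuousOn (cc.continuousOn_wordMap σ)

lemma isPreconnected_Jc (σ : List (Fin cc.N)) : IsPreconnected (cc.Jc σ) :=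
  (isPreconnected_Icc).image _ (cc.continuousOn_wordMap σ)

lemma Jc_nonempty (σ : List (Fin cc.N)) : (cc.Jc σ).Nonempty :=
  ⟨cc.wordMap σ 0, 0, by norm_num, rfl⟩

lemma dist_le_diamJ {σ : List (Fin cc.N)} {x y : ℝ} (hx : x ∈ cc.Jc σ) (hy : y ∈ cc.Jc σ) :
    |x - y| ≤ cc.diamJ σ := by
  have := Metric.dist_le_diam_of_mem (cc.isCompact_Jc σ).isBounded hx hy
  rwa [Real.dist_eq] at this

lemma diamJ_le_pow (σ : List (Fin cc.N)) : cc.diamJ σ ≤ (cc.b)⁻¹ ^ σ.length := by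
  induction σ with
  | nil =>
    rw [diamJ, Jc_nil, Real.diam_Icc (by norm_num : (0:ℝ) ≤ 1)]
    norm_num
  | cons j τ ih =>
    have hbpos := cc.b_pos
    have hinv : (0:ℝ) ≤ cc.b⁻¹ ^ (j :: τ).length := by positivity
    apply Metric.diam_le_of_forall_dist_le hinv
    intro x hx y hy
    have h1 := (cc.slope_bound j (cc.Jc_cons_subset j τ hx) (cc.Jc_cons_subset j τ hy)).1
    have h2 : |cc.f x - cc.f y| ≤ cc.diamJ τ :=
      cc.dist_le_diamJ (cc.f_mem_of_cons hx) (cc.f_mem_of_cons hy)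
    rw [Real.dist_eq]
    have : cc.b * |x - y| ≤ cc.b⁻¹ ^ τ.length := le_trans h1 (le_trans h2 ih)
    rw [List.length_cons, pow_succ, mul_comm (cc.b⁻¹ ^ τ.length)]
    calc |x - y| ≤ cc.b⁻¹ ^ τ.length / cc.b := by
          rw [le_div_iff₀ hbpos, mul_comm]; exact this
      _ = cc.b⁻¹ * cc.b⁻¹ ^ τ.length := by field_simp

lemma pow_le_diamJ (σ : List (Fin cc.N)) : (cc.B)⁻¹ ^ σ.length ≤ cc.diamJ σ := by
  have hBpos := cc.B_pos
  induction σ with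
  | nil =>
    rw [diamJ, Jc_nil, Real.diam_Icc (by norm_num : (0:ℝ) ≤ 1)]
    norm_num
  | cons j τ ih =>
    have key : cc.diamJ τ ≤ cc.B * cc.diamJ (j :: τ) := by
      apply Metric.diam_le_of_forall_dist_le
        (mul_nonneg hBpos.le Metric.diam_nonneg)
      rintro x ⟨s, hs, rfl⟩ y ⟨t, ht, rfl⟩
      have hxs : cc.wordMap (j :: τ) s ∈ cc.Jc (j :: τ) := ⟨s, hs, rfl⟩
      have hxt : cc.wordMap (j :: τ) t ∈ cc.Jc (j :: τ) := ⟨t, ht, rfl⟩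
      have hfs : cc.f (cc.wordMap (j :: τ) s) = cc.wordMap τ s :=
        cc.hφ_rinv j _ (cc.wordMap_mem τ s hs)
      have hft : cc.f (cc.wordMap (j :: τ) t) = cc.wordMap τ t :=
        cc.hφ_rinv j _ (cc.wordMap_mem τ t ht)
      have h2 := (cc.slope_bound j (cc.Jc_cons_subset j τ hxs) (cc.Jc_cons_subset j τ hxt)).2
      rw [hfs, hft] at h2
      rw [Real.dist_eq]
      refine h2.trans (mul_le_mul_of_nonneg_left ?_ hBpos.le)
      exact cc.dist_le_diamJ hxs hxt
    rw [List.length_cons, pow_succ, mul_comm]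
    calc cc.B⁻¹ * cc.B⁻¹ ^ τ.length ≤ cc.B⁻¹ * cc.diamJ τ := by
          exact mul_le_mul_of_nonneg_left ih (by positivity)

      _ ≤ cc.B⁻¹ * (cc.B * cc.diamJ (j :: τ)) := by
          exact mul_le_mul_of_nonneg_left key (by positivity)
      _ = cc.diamJ (j :: τ) := by field_simp

lemma diamJ_pos (σ : List (Fin cc.N)) : 0 < cc.diamJ σ :=
  lt_of_lt_of_le (pow_pos (inv_pos.2 cc.B_pos) _) (cc.pow_le_diamJ σ)

lemma iter_mem_Jsub (σ : List (Fin cc.N)) {k : ℕ} (hk : k < σ.length) :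
    ∀ y ∈ cc.Jc σ, cc.f^[k] y ∈ cc.Jsub (σ[k]'hk) := by
  intro y hy
  have h := cc.iter_mem_drop σ y hy k hk.le
  rw [List.drop_eq_getElem_cons hk] at h
  exact cc.Jc_cons_subset _ _ h

lemma one_lt_rpow_base : 1 < cc.b ^ cc.γ := by
  rw [Real.one_lt_rpow_iff_of_pos cc.b_pos]
  exact Or.inl ⟨cc.hb1, cc.hγ.1⟩

lemma one_le_xi : 1 ≤ cc.xi :=
  Real.one_le_exp (div_nonneg cc.hc.le (by linarith [cc.one_lt_rpow_base]))

lemma xi_pos : 0 < cc.xi := Real.exp_pos _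

lemma rpow_pow (m : ℕ) : ((cc.b⁻¹ ^ m : ℝ)) ^ cc.γ = ((cc.b⁻¹) ^ cc.γ) ^ m := by
  have h0 : (0:ℝ) ≤ cc.b⁻¹ := inv_nonneg.2 cc.b_pos.le
  rw [← Real.rpow_natCast cc.b⁻¹ m, ← Real.rpow_mul h0, mul_comm, Real.rpow_mul h0,
    Real.rpow_natCast]

lemma sum_delta_le (n : ℕ) :
    ∑ k ∈ Finset.range n, cc.c * (cc.b⁻¹ ^ (n - k) : ℝ) ^ cc.γ ≤ cc.c / (cc.b ^ cc.γ - 1) := by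
  set r : ℝ := (cc.b⁻¹) ^ cc.γ with hr
  have hrs : r = (cc.b ^ cc.γ)⁻¹ := Real.inv_rpow cc.b_pos.le cc.γ
  have hs1 : 1 < cc.b ^ cc.γ := cc.one_lt_rpow_base
  have hr0 : 0 ≤ r := Real.rpow_nonneg (inv_nonneg.2 cc.b_pos.le) _
  have hr1 : r < 1 := by
    rw [hrs]; rw [inv_lt_one_iff₀]; right; exact hs1
  have hsum : ∑ k ∈ Finset.range n, cc.c * (cc.b⁻¹ ^ (n - k) : ℝ) ^ cc.γ
      = cc.c * ∑ k ∈ Finset.range n, r ^ (n - k) := by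
    rw [Finset.mul_sum]
    refine Finset.sum_congr rfl fun k hk => ?_
    rw [cc.rpow_pow]
  rw [hsum]
  have hreflect : ∑ k ∈ Finset.range n, r ^ (n - k) = ∑ j ∈ Finset.range n, r ^ (j + 1) := by
    rw [← Finset.sum_range_reflect (fun j => r ^ (j + 1)) n]
    refine Finset.sum_congr rfl fun k hk => ?_
    have hk' := Finset.mem_range.1 hk
    congr 1
    omega
  rw [hreflect]
  have hgeom : ∑ j ∈ Finset.range n, r ^ (j + 1) = r * ∑ j ∈ Finset.range n, r ^ j := by
    rw [Finset.mul_sum]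
    exact Finset.sum_congr rfl fun j _ => by ring
  rw [hgeom]
  have hle : ∑ j ∈ Finset.range n, r ^ j ≤ (1 - r)⁻¹ := by
    rw [geom_sum_eq (ne_of_lt hr1) n]
    have h1r : 0 < 1 - r := by linarith
    have : (r ^ n - 1) / (r - 1) = (1 - r ^ n) / (1 - r) := by
      rw [div_eq_div_iff (by linarith) (by linarith)]; ring
    rw [this, inv_eq_one_div]
    gcongr
    nlinarith [pow_nonneg hr0 n]
  have hfinal : r * (1 - r)⁻¹ = (cc.b ^ cc.γ - 1)⁻¹ := by
    have hs0 : cc.b ^ cc.γ ≠ 0 := by positivity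
    rw [hrs]
    field_simp
  calc cc.c * (r * ∑ j ∈ Finset.range n, r ^ j)
      ≤ cc.c * (r * (1 - r)⁻¹) := by
        refine mul_le_mul_of_nonneg_left ?_ cc.hc.le
        exact mul_le_mul_of_nonneg_left hle hr0
    _ = cc.c / (cc.b ^ cc.γ - 1) := by rw [hfinal, div_eq_mul_inv]

lemma distortion (σ : List (Fin cc.N)) {x y : ℝ} (hx : x ∈ cc.Jc σ) (hy : y ∈ cc.Jc σ) :
    |∏ k ∈ Finset.range σ.length, deriv cc.f (cc.f^[k] x)| ≤
      cc.xi * |∏ k ∈ Finset.range σ.length, deriv cc.f (cc.f^[k] y)| := by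
  set n := σ.length with hn
  rw [Finset.abs_prod, Finset.abs_prod]
  have per : ∀ k ∈ Finset.range n, |deriv cc.f (cc.f^[k] x)| ≤
      |deriv cc.f (cc.f^[k] y)| * Real.exp (cc.c * ((cc.b⁻¹ ^ (n - k) : ℝ)) ^ cc.γ) := by
    intro k hk
    have hkn := Finset.mem_range.1 hk
    have hmx := cc.iter_mem_Jsub σ hkn x hx
    have hmy := cc.iter_mem_Jsub σ hkn y hy
    have hH := cc.hHolder _ _ hmx _ hmy
    have hdist : |cc.f^[k] x - cc.f^[k] y| ≤ cc.b⁻¹ ^ (n - k) := by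
      have h1 : |cc.f^[k] x - cc.f^[k] y| ≤ cc.diamJ (σ.drop k) :=
        cc.dist_le_diamJ (cc.iter_mem_drop σ x hx k hkn.le) (cc.iter_mem_drop σ y hy k hkn.le)
      have h2 := cc.diamJ_le_pow (σ.drop k)
      rw [List.length_drop] at h2
      exact h1.trans h2
    set δ : ℝ := cc.c * ((cc.b⁻¹ ^ (n - k) : ℝ)) ^ cc.γ with hδ
    have hδ0 : 0 ≤ δ := mul_nonneg cc.hc.le
      (Real.rpow_nonneg (pow_nonneg (inv_nonneg.2 cc.b_pos.le) _) _)
    have hdelta : |deriv cc.f (cc.f^[k] x) - deriv cc.f (cc.f^[k] y)| ≤ δ := by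
      refine hH.trans ?_
      exact mul_le_mul_of_nonneg_left
        (Real.rpow_le_rpow (abs_nonneg _) hdist cc.hγ.1.le) cc.hc.le
    have hb_ay : cc.b ≤ |deriv cc.f (cc.f^[k] y)| := (cc.deriv_bounds _ _ hmy).1
    have h1ay : 1 ≤ |deriv cc.f (cc.f^[k] y)| := le_trans cc.hb1.le hb_ay
    have habs : |deriv cc.f (cc.f^[k] x)| ≤ |deriv cc.f (cc.f^[k] y)| + δ := by
      have := abs_sub_abs_le_abs_sub (deriv cc.f (cc.f^[k] x)) (deriv cc.f (cc.f^[k] y))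
      linarith
    have hexp : 1 + δ ≤ Real.exp δ := by
      have := Real.add_one_le_exp δ
      linarith
    calc |deriv cc.f (cc.f^[k] x)| ≤ |deriv cc.f (cc.f^[k] y)| + δ := habs
      _ ≤ |deriv cc.f (cc.f^[k] y)| * (1 + δ) := by nlinarith
      _ ≤ |deriv cc.f (cc.f^[k] y)| * Real.exp δ := by
          exact mul_le_mul_of_nonneg_left hexp (abs_nonneg _)
  have hprodnn : (0:ℝ) ≤ ∏ k ∈ Finset.range n, |deriv cc.f (cc.f^[k] y)| :=
    Finset.prod_nonneg fun k _ => abs_nonneg _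
  calc ∏ k ∈ Finset.range n, |deriv cc.f (cc.f^[k] x)|
      ≤ ∏ k ∈ Finset.range n, (|deriv cc.f (cc.f^[k] y)| *
          Real.exp (cc.c * ((cc.b⁻¹ ^ (n - k) : ℝ)) ^ cc.γ)) :=
        Finset.prod_le_prod (fun k _ => abs_nonneg _) per
    _ = (∏ k ∈ Finset.range n, |deriv cc.f (cc.f^[k] y)|) *
          ∏ k ∈ Finset.range n, Real.exp (cc.c * ((cc.b⁻¹ ^ (n - k) : ℝ)) ^ cc.γ) :=
        Finset.prod_mul_distrib
    _ = (∏ k ∈ Finset.range n, |deriv cc.f (cc.f^[k] y)|) *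
          Real.exp (∑ k ∈ Finset.range n, cc.c * ((cc.b⁻¹ ^ (n - k) : ℝ)) ^ cc.γ) := by
        rw [← Real.exp_sum]
    _ ≤ (∏ k ∈ Finset.range n, |deriv cc.f (cc.f^[k] y)|) * cc.xi := by
        refine mul_le_mul_of_nonneg_left ?_ hprodnn
        exact Real.exp_le_exp.2 (cc.sum_delta_le n)
    _ = cc.xi * ∏ k ∈ Finset.range n, |deriv cc.f (cc.f^[k] y)| := mul_comm _ _

lemma deriv_iter_eq (σ : List (Fin cc.N)) {x : ℝ} (hx : x ∈ cc.Jc σ) :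
    deriv (cc.f^[σ.length]) x = ∏ k ∈ Finset.range σ.length, deriv cc.f (cc.f^[k] x) :=
  (cc.hasDerivAt_iter σ x hx).deriv

lemma prod_abs_pos (σ : List (Fin cc.N)) {x : ℝ} (hx : x ∈ cc.Jc σ) :
    0 < |∏ k ∈ Finset.range σ.length, deriv cc.f (cc.f^[k] x)| := by
  rw [Finset.abs_prod]
  refine Finset.prod_pos fun k hk => ?_
  exact lt_of_lt_of_le cc.b_pos
    (cc.deriv_bounds _ _ (cc.iter_mem_Jsub σ (Finset.mem_range.1 hk) x hx)).1

lemma mvt_iter (σ : List (Fin cc.N)) {u v : ℝ} (hu : u ∈ cc.Jc σ) (hv : v ∈ cc.Jc σ)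
    (huv : u < v) :
    ∃ z ∈ cc.Jc σ, (∏ k ∈ Finset.range σ.length, deriv cc.f (cc.f^[k] z)) * (v - u)
      = cc.f^[σ.length] v - cc.f^[σ.length] u := by
  have hsub : Set.Icc u v ⊆ cc.Jc σ := (cc.isPreconnected_Jc σ).Icc_subset hu hv
  have hcont : ContinuousOn (cc.f^[σ.length]) (Set.Icc u v) := fun w hw =>
    (cc.hasDerivAt_iter σ w (hsub hw)).continuousAt.continuousWithinAt
  have hderiv : ∀ w ∈ Set.Ioo u v, HasDerivAt (cc.f^[σ.length])
      ((fun w => ∏ k ∈ Finset.range σ.length, deriv cc.f (cc.f^[k] w)) w) w := fun w hw =>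
    cc.hasDerivAt_iter σ w (hsub (Set.Ioo_subset_Icc_self hw))
  obtain ⟨z, hz, hslope⟩ := exists_hasDerivAt_eq_slope _ _ huv hcont hderiv
  refine ⟨z, hsub (Set.Ioo_subset_Icc_self hz), ?_⟩
  rw [hslope, div_mul_cancel₀ _ (by linarith : v - u ≠ 0)]

lemma wordMap_append (σ τ : List (Fin cc.N)) :
    cc.wordMap (σ ++ τ) = cc.wordMap σ ∘ cc.wordMap τ := by
  induction σ with
  | nil => rfl
  | cons j σ' ih => show cc.φ j ∘ cc.wordMap (σ' ++ τ) = _; rw [ih]; rfl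

lemma Jc_append_subset (σ τ : List (Fin cc.N)) : cc.Jc (σ ++ τ) ⊆ cc.Jc σ := by
  rintro x ⟨t, ht, rfl⟩
  rw [cc.wordMap_append]
  exact ⟨cc.wordMap τ t, cc.wordMap_mem τ t ht, rfl⟩

lemma f_iter_final {σ : List (Fin cc.N)} {x : ℝ} (hx : x ∈ cc.Jc σ) :
    cc.f^[σ.length] x ∈ Set.Icc (0:ℝ) 1 := by
  have := cc.iter_mem_drop σ x hx σ.length le_rfl
  rwa [List.drop_length, cc.Jc_nil] at this

lemma exists_mvt_unit (σ : List (Fin cc.N)) :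
    ∃ z ∈ cc.Jc σ, |∏ k ∈ Finset.range σ.length, deriv cc.f (cc.f^[k] z)| *
      |cc.wordMap σ 1 - cc.wordMap σ 0| = 1 ∧
      |cc.wordMap σ 1 - cc.wordMap σ 0| ≤ cc.diamJ σ := by
  have h0 : (0:ℝ) ∈ Set.Icc (0:ℝ) 1 := by norm_num
  have h1 : (1:ℝ) ∈ Set.Icc (0:ℝ) 1 := by norm_num
  set u := cc.wordMap σ 0 with hudef
  set v := cc.wordMap σ 1 with hvdef
  have hu : u ∈ cc.Jc σ := ⟨0, h0, rfl⟩
  have hv : v ∈ cc.Jc σ := ⟨1, h1, rfl⟩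
  have hfu : cc.f^[σ.length] u = 0 := cc.f_iter_wordMap σ 0 h0
  have hfv : cc.f^[σ.length] v = 1 := cc.f_iter_wordMap σ 1 h1
  have hne : u ≠ v := by
    intro h; rw [h, hfv] at hfu; norm_num at hfu
  have hdd : |v - u| ≤ cc.diamJ σ := cc.dist_le_diamJ hv hu
  rcases lt_or_gt_of_ne hne with h | h
  · obtain ⟨z, hz, heq⟩ := cc.mvt_iter σ hu hv h
    refine ⟨z, hz, ?_, hdd⟩
    rw [hfu, hfv] at heq
    have := congrArg abs heq
    rwa [abs_mul, abs_of_pos (by linarith : (0:ℝ) < v - u), sub_zero, abs_one,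
      ← abs_of_pos (by linarith : (0:ℝ) < v - u)] at this
  · obtain ⟨z, hz, heq⟩ := cc.mvt_iter σ hv hu h
    refine ⟨z, hz, ?_, hdd⟩
    rw [hfu, hfv] at heq
    have := congrArg abs heq
    rwa [abs_mul, zero_sub, abs_neg, abs_one, abs_sub_comm u v] at this

theorem bdp_upper (σ : List (Fin cc.N)) :
    ∀ x ∈ cc.Jc σ,
      |∏ k ∈ Finset.range σ.length, deriv cc.f (cc.f^[k] x)| * cc.diamJ σ ≤ cc.xi := by
  intro x hx
  have hP : 0 < |∏ k ∈ Finset.range σ.length, deriv cc.f (cc.f^[k] x)| := cc.prod_abs_pos σ hx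
  have key : ∀ u ∈ cc.Jc σ, ∀ v ∈ cc.Jc σ, u < v →
      v - u ≤ cc.xi / |∏ k ∈ Finset.range σ.length, deriv cc.f (cc.f^[k] x)| := by
    intro u hu v hv huv
    obtain ⟨z, hz, heq⟩ := cc.mvt_iter σ hu hv huv
    have hdist := cc.distortion σ hx hz
    have hfu := cc.f_iter_final hu
    have hfv := cc.f_iter_final hv
    have hone : |cc.f^[σ.length] v - cc.f^[σ.length] u| ≤ 1 := by
      rw [abs_sub_le_iff]
      constructor <;> [linarith [hfu.1, hfv.2]; linarith [hfu.2, hfv.1]]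
    have habs : |∏ k ∈ Finset.range σ.length, deriv cc.f (cc.f^[k] z)| * (v - u) ≤ 1 := by
      have := congrArg abs heq
      rw [abs_mul, abs_of_pos (by linarith : (0:ℝ) < v - u)] at this
      rw [this]; exact hone
    rw [le_div_iff₀ hP, mul_comm]
    calc |∏ k ∈ Finset.range σ.length, deriv cc.f (cc.f^[k] x)| * (v - u)
        ≤ cc.xi * |∏ k ∈ Finset.range σ.length, deriv cc.f (cc.f^[k] z)| * (v - u) :=
          mul_le_mul_of_nonneg_right hdist (by linarith)
      _ = cc.xi * (|∏ k ∈ Finset.range σ.length, deriv cc.f (cc.f^[k] z)| * (v - u)) := by ring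
      _ ≤ cc.xi * 1 := mul_le_mul_of_nonneg_left habs cc.xi_pos.le
      _ = cc.xi := mul_one _
  have hdq : cc.diamJ σ ≤ cc.xi / |∏ k ∈ Finset.range σ.length, deriv cc.f (cc.f^[k] x)| := by
    apply Metric.diam_le_of_forall_dist_le (div_nonneg cc.xi_pos.le hP.le)
    intro u hu v hv
    rcases lt_trichotomy u v with h | h | h
    · rw [Real.dist_eq, abs_of_neg (by linarith : u - v < 0), neg_sub]
      exact key u hu v hv h
    · subst h; rw [dist_self]; exact div_nonneg cc.xi_pos.le hP.le
    · rw [Real.dist_eq, abs_of_pos (by linarith : 0 < u - v)]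
      exact key v hv u hu h
  rw [mul_comm, ← le_div_iff₀ hP]
  exact hdq

end CookieCutter

theorem bounded_distortion_principle (cc : CookieCutter) :
    ∀ n : ℕ, 1 ≤ n → ∀ σ : List (Fin cc.N), σ.length = n →
      (∀ x ∈ cc.Jc σ,
        cc.xi⁻¹ ≤ |deriv (cc.f^[n]) x| * cc.diamJ σ ∧
        |deriv (cc.f^[n]) x| * cc.diamJ σ ≤ cc.xi) ∧
      ∀ j : Fin cc.N, cc.xi⁻¹ ^ 2 * cc.B⁻¹ * cc.diamJ σ ≤ cc.diamJ (σ ++ [j]) := by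
  intro n hn σ hσlen
  subst hσlen
  have hd : 0 < cc.diamJ σ := cc.diamJ_pos σ
  have hξ : 0 < cc.xi := cc.xi_pos
  have hξ1 : 1 ≤ cc.xi := cc.one_le_xi
  have hB : 0 < cc.B := cc.B_pos
  constructor
  · intro x hx
    have hder := cc.deriv_iter_eq σ hx
    have hP : 0 < |∏ k ∈ Finset.range σ.length, deriv cc.f (cc.f^[k] x)| := cc.prod_abs_pos σ hx
    constructor
    · -- lower bound
      obtain ⟨z, hz, hunit, hdd⟩ := cc.exists_mvt_unit σ
      have hdist : |∏ k ∈ Finset.range σ.length, deriv cc.f (cc.f^[k] z)| ≤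
          cc.xi * |∏ k ∈ Finset.range σ.length, deriv cc.f (cc.f^[k] x)| :=
        cc.distortion σ hz hx
      have h1 : 1 ≤ cc.xi * (|∏ k ∈ Finset.range σ.length, deriv cc.f (cc.f^[k] x)| *
          cc.diamJ σ) := by
        calc (1:ℝ) = |∏ k ∈ Finset.range σ.length, deriv cc.f (cc.f^[k] z)| *
              |cc.wordMap σ 1 - cc.wordMap σ 0| := hunit.symm
          _ ≤ (cc.xi * |∏ k ∈ Finset.range σ.length, deriv cc.f (cc.f^[k] x)|) *
              cc.diamJ σ := by
              apply mul_le_mul hdist hdd (abs_nonneg _)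
              positivity
          _ = cc.xi * (|∏ k ∈ Finset.range σ.length, deriv cc.f (cc.f^[k] x)| *
              cc.diamJ σ) := by ring
      rw [hder]
      calc cc.xi⁻¹ = cc.xi⁻¹ * 1 := (mul_one _).symm
        _ ≤ cc.xi⁻¹ * (cc.xi * (|∏ k ∈ Finset.range σ.length, deriv cc.f (cc.f^[k] x)| *
            cc.diamJ σ)) := mul_le_mul_of_nonneg_left h1 (by positivity)
        _ = |∏ k ∈ Finset.range σ.length, deriv cc.f (cc.f^[k] x)| * cc.diamJ σ := by
            field_simp
    · rw [hder]
      exact cc.bdp_upper σ x hx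
  · -- second part
    intro j
    set σ' := σ ++ [j] with hσ'
    have hd' : 0 < cc.diamJ σ' := cc.diamJ_pos σ'
    obtain ⟨z, hz, hunit, hdd⟩ := cc.exists_mvt_unit σ'
    have hzσ : z ∈ cc.Jc σ := cc.Jc_append_subset σ [j] hz
    have hlen : σ'.length = σ.length + 1 := by simp [hσ']
    -- split the product
    have hsplit : ∏ k ∈ Finset.range σ'.length, deriv cc.f (cc.f^[k] z) =
        (∏ k ∈ Finset.range σ.length, deriv cc.f (cc.f^[k] z)) *
          deriv cc.f (cc.f^[σ.length] z) := by
      rw [hlen, Finset.prod_range_succ]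
    have hfz : cc.f^[σ.length] z ∈ cc.Jsub j := by
      have h := cc.iter_mem_drop σ' z hz σ.length (by rw [hlen]; omega)
      rw [hσ', List.drop_left] at h
      exact cc.Jc_cons_subset j [] h
    have hBz : |deriv cc.f (cc.f^[σ.length] z)| ≤ cc.B := (cc.deriv_bounds j _ hfz).2
    have hup : |∏ k ∈ Finset.range σ.length, deriv cc.f (cc.f^[k] z)| * cc.diamJ σ ≤ cc.xi :=
      cc.bdp_upper σ z hzσ
    have hpn : (0:ℝ) ≤ |∏ k ∈ Finset.range σ.length, deriv cc.f (cc.f^[k] z)| := abs_nonneg _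
    have h1 : 1 ≤ |∏ k ∈ Finset.range σ.length, deriv cc.f (cc.f^[k] z)| *
        (cc.B * cc.diamJ σ') := by
      calc (1:ℝ) = |∏ k ∈ Finset.range σ'.length, deriv cc.f (cc.f^[k] z)| *
            |cc.wordMap σ' 1 - cc.wordMap σ' 0| := hunit.symm
        _ = |∏ k ∈ Finset.range σ.length, deriv cc.f (cc.f^[k] z)| *
            |deriv cc.f (cc.f^[σ.length] z)| * |cc.wordMap σ' 1 - cc.wordMap σ' 0| := by
            rw [hsplit, abs_mul]
        _ ≤ |∏ k ∈ Finset.range σ.length, deriv cc.f (cc.f^[k] z)| * cc.B * cc.diamJ σ' := by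
            apply mul_le_mul _ hdd (abs_nonneg _) (by positivity)
            exact mul_le_mul_of_nonneg_left hBz hpn
        _ = |∏ k ∈ Finset.range σ.length, deriv cc.f (cc.f^[k] z)| *
            (cc.B * cc.diamJ σ') := by ring
    have h3 : cc.diamJ σ ≤ cc.xi * cc.B * cc.diamJ σ' := by
      calc cc.diamJ σ = cc.diamJ σ * 1 := (mul_one _).symm
        _ ≤ cc.diamJ σ * (|∏ k ∈ Finset.range σ.length, deriv cc.f (cc.f^[k] z)| *
            (cc.B * cc.diamJ σ')) := mul_le_mul_of_nonneg_left h1 hd.le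
        _ = (|∏ k ∈ Finset.range σ.length, deriv cc.f (cc.f^[k] z)| * cc.diamJ σ) *
            (cc.B * cc.diamJ σ') := by ring
        _ ≤ cc.xi * (cc.B * cc.diamJ σ') := mul_le_mul_of_nonneg_right hup (by positivity)
        _ = cc.xi * cc.B * cc.diamJ σ' := by ring
    have h4 : cc.xi⁻¹ * cc.B⁻¹ * cc.diamJ σ ≤ cc.diamJ σ' := by
      have := mul_le_mul_of_nonneg_left h3 (show (0:ℝ) ≤ cc.xi⁻¹ * cc.B⁻¹ by positivity)
      calc cc.xi⁻¹ * cc.B⁻¹ * cc.diamJ σ ≤ cc.xi⁻¹ * cc.B⁻¹ * (cc.xi * cc.B * cc.diamJ σ') := by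
            linarith
        _ = cc.diamJ σ' := by field_simp
    have h5 : cc.xi⁻¹ ^ 2 ≤ cc.xi⁻¹ := by
      have h6 : cc.xi⁻¹ ≤ 1 := by
        rw [inv_le_one_iff₀]; right; exact hξ1
      nlinarith [inv_nonneg.2 hξ.le]
    calc cc.xi⁻¹ ^ 2 * cc.B⁻¹ * cc.diamJ σ ≤ cc.xi⁻¹ * cc.B⁻¹ * cc.diamJ σ := by
          apply mul_le_mul_of_nonneg_right _ hd.le
          exact mul_le_mul_of_nonneg_right h5 (by positivity)
      _ ≤ cc.diamJ σ' := h4
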